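/- Let A* be a real random variable with finite positive variance, let ε_A be independent of A* with mean 0 and variance σγ² > 0, and let ε_M be independent of (A*, ε_A) with mean 0 and variance σα² > 0. Define A = γ₀ + γ₁A* + ε_A and M = α₀ + α₁A + ε_M with α₁ ≠ 0. Then, with ρ_{AA*}² = Cov(A, A*)²/(Var(A)Var(A*)) and ρ_{AM}² = Cov(A, M)²/(Var(A)Var(M)), the MP reliability index satisfies σγ²/(σγ² + σα²/α₁²) = (1 − ρ_{AA*}²)/(1/ρ_{AM}² − ρ_{AA*}²). -/

import Mathlib

open MeasureTheory

/-- Covariance of two real random variables. -/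
noncomputable def cov {Ω : Type*} [MeasurableSpace Ω] (P : Measure Ω) (X Y : Ω → ℝ) : ℝ :=
  ∫ ω, (X ω - ∫ ω', X ω' ∂P) * (Y ω - ∫ ω', Y ω' ∂P) ∂P

/-- Variance of a real random variable. -/
noncomputable def var {Ω : Type*} [MeasurableSpace Ω] (P : Measure Ω) (X : Ω → ℝ) : ℝ :=
  cov P X X

section Aux
variable {Ω : Type*} [MeasurableSpace Ω] {P : Measure Ω} [IsProbabilityMeasure P]

omit [IsProbabilityMeasure P] in
lemma my_int_mul {X Y : Ω → ℝ} (hX : MemLp X 2 P) (hY : MemLp Y 2 P) :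
    Integrable (fun ω => X ω * Y ω) P := by
  have h : Integrable (fun ω => (((X ω + Y ω) ^ 2 - X ω ^ 2) - Y ω ^ 2) / 2) P :=
    (((hX.add hY).integrable_sq.sub hX.integrable_sq).sub hY.integrable_sq).div_const 2
  convert h using 2 with ω
  ring

omit [IsProbabilityMeasure P] in
lemma my_cov_comm (X Y : Ω → ℝ) : cov P X Y = cov P Y X := by
  unfold cov; congr 1; ext ω; ring

lemma my_cov_indep {X Y : Ω → ℝ} (h : ProbabilityTheory.IndepFun X Y P)
    (hX : MemLp X 2 P) (hY : MemLp Y 2 P) : cov P X Y = 0 := by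
  have hX1 : Integrable X P := hX.integrable one_le_two
  have h' : ProbabilityTheory.IndepFun (fun ω => X ω - ∫ ω', X ω' ∂P)
      (fun ω => Y ω - ∫ ω', Y ω' ∂P) P :=
    h.comp (measurable_id.sub_const _) (measurable_id.sub_const _)
  have hint := h'.integral_mul_eq_mul_integral
    (hX.aestronglyMeasurable.sub aestronglyMeasurable_const)
    (hY.aestronglyMeasurable.sub aestronglyMeasurable_const)
  have hz : (∫ ω, (X ω - ∫ ω', X ω' ∂P) ∂P) = 0 := by
    rw [integral_sub hX1 (integrable_const _), integral_const]
    simp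
  unfold cov
  calc (∫ ω, (X ω - ∫ ω', X ω' ∂P) * (Y ω - ∫ ω', Y ω' ∂P) ∂P)
      = (∫ ω, (X ω - ∫ ω', X ω' ∂P) ∂P) * (∫ ω, (Y ω - ∫ ω', Y ω' ∂P) ∂P) := hint
    _ = 0 := by rw [hz, zero_mul]

lemma my_cov_affine {X Y Z : Ω → ℝ} (hX : MemLp X 2 P) (hY : MemLp Y 2 P) (hZ : MemLp Z 2 P)
    (c a : ℝ) :
    cov P (fun ω => c + a * X ω + Y ω) Z = a * cov P X Z + cov P Y Z := by
  have hX1 : Integrable X P := hX.integrable one_le_two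
  have hY1 : Integrable Y P := hY.integrable one_le_two
  have hmean : (∫ ω, (c + a * X ω + Y ω) ∂P)
      = c + a * (∫ ω, X ω ∂P) + ∫ ω, Y ω ∂P := by
    have h1 : Integrable (fun ω => c + a * X ω) P := (integrable_const c).add (hX1.const_mul a)
    rw [integral_add (f := fun ω => c + a * X ω) (g := Y) h1 hY1,
      integral_add (f := fun _ => c) (g := fun ω => a * X ω) (integrable_const c)
        (hX1.const_mul a), integral_const, integral_const_mul]
    simp
  have hXc : MemLp (fun ω => X ω - ∫ ω', X ω' ∂P) 2 P := hX.sub (memLp_const _)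
  have hYc : MemLp (fun ω => Y ω - ∫ ω', Y ω' ∂P) 2 P := hY.sub (memLp_const _)
  have hZc : MemLp (fun ω => Z ω - ∫ ω', Z ω' ∂P) 2 P := hZ.sub (memLp_const _)
  unfold cov
  rw [hmean]
  have key : ∀ ω, (c + a * X ω + Y ω - (c + a * (∫ ω', X ω' ∂P) + ∫ ω', Y ω' ∂P))
      * (Z ω - ∫ ω', Z ω' ∂P)
      = a * ((X ω - ∫ ω', X ω' ∂P) * (Z ω - ∫ ω', Z ω' ∂P))
        + (Y ω - ∫ ω', Y ω' ∂P) * (Z ω - ∫ ω', Z ω' ∂P) := by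
    intro ω; ring
  simp_rw [key]
  rw [integral_add ((my_int_mul hXc hZc).const_mul a) (my_int_mul hYc hZc),
    integral_const_mul]

end Aux

/-- With `A = γ₀ + γ₁ A* + ε_A` and `M = α₀ + α₁ A + ε_M`, where
`ε_A ⟂ A*`, `ε_M ⟂ (A*, ε_A)`, the errors have mean zero and variances `σγ², σα² > 0`,
the MP reliability index satisfies
`σγ²/(σγ² + σα²/α₁²) = (1 − ρ_{AA*}²)/(1/ρ_{AM}² − ρ_{AA*}²)`. -/
theorem stmt_5
    {Ω : Type*} [MeasurableSpace Ω] (P : Measure Ω) [IsProbabilityMeasure P]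
    (Astar εA εM : Ω → ℝ)
    (hAstar : MemLp Astar 2 P) (hεA : MemLp εA 2 P) (hεM : MemLp εM 2 P)
    (hVarAstar : 0 < var P Astar)
    (γ₀ γ₁ α₀ α₁ σγ2 σα2 : ℝ) (hα₁ : α₁ ≠ 0) (hσγ : 0 < σγ2) (hσα : 0 < σα2)
    (hmeanA : ∫ ω, εA ω ∂P = 0) (hmeanM : ∫ ω, εM ω ∂P = 0)
    (hvarA : var P εA = σγ2) (hvarM : var P εM = σα2)
    (hindA : ProbabilityTheory.IndepFun εA Astar P)
    (hindM : ProbabilityTheory.IndepFun εM (fun ω => (Astar ω, εA ω)) P)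
    (A M : Ω → ℝ)
    (hA : A = fun ω => γ₀ + γ₁ * Astar ω + εA ω)
    (hM : M = fun ω => α₀ + α₁ * A ω + εM ω)
    (ρAA2 ρAM2 : ℝ)
    (hρAA2 : ρAA2 = cov P A Astar ^ 2 / (var P A * var P Astar))
    (hρAM2 : ρAM2 = cov P A M ^ 2 / (var P A * var P M)) :
    σγ2 / (σγ2 + σα2 / α₁ ^ 2) = (1 - ρAA2) / (1 / ρAM2 - ρAA2) := by
  -- membership in L²
  have hA2 : MemLp A 2 P := by
    rw [hA]
    exact ((memLp_const γ₀).add (hAstar.const_mul γ₁)).add hεA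
  have hM2 : MemLp M 2 P := by
    rw [hM]
    exact ((memLp_const α₀).add (hA2.const_mul α₁)).add hεM
  -- independence of εM and A
  have hindMA : ProbabilityTheory.IndepFun εM A P := by
    rw [hA]
    exact hindM.comp measurable_id
      ((measurable_const.add (measurable_fst.const_mul γ₁)).add measurable_snd)
  -- covariance computations
  set v := var P Astar with hv
  have covAX : cov P A Astar = γ₁ * v := by
    rw [hA, my_cov_affine hAstar hεA hAstar, my_cov_indep hindA hεA hAstar]
    simp [var, hv]
  have covAεA : cov P A εA = σγ2 := by
    rw [hA, my_cov_affine hAstar hεA hεA, my_cov_comm Astar εA,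
      my_cov_indep hindA hεA hAstar, show cov P εA εA = σγ2 from hvarA]
    ring
  have varAval : var P A = γ₁ ^ 2 * v + σγ2 := by
    have : var P A = cov P A A := rfl
    rw [this]
    nth_rewrite 2 [hA]
    rw [my_cov_comm, my_cov_affine hAstar hεA hA2, my_cov_comm Astar A, covAX,
      my_cov_comm εA A, covAεA]
    ring
  set w := var P A with hw
  have covAM : cov P A M = α₁ * w := by
    rw [my_cov_comm, hM, my_cov_affine hA2 hεM hA2, my_cov_indep hindMA hεM hA2]
    simp [var, hw]
  have covAεM : cov P A εM = 0 := by
    rw [my_cov_comm]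
    exact my_cov_indep hindMA hεM hA2
  have varMval : var P M = α₁ ^ 2 * w + σα2 := by
    have : var P M = cov P M M := rfl
    rw [this]
    nth_rewrite 2 [hM]
    rw [my_cov_comm, my_cov_affine hA2 hεM hM2, covAM,
      my_cov_comm εM M, hM, my_cov_affine hA2 hεM hεM, covAεM,
      show cov P εM εM = σα2 from hvarM]
    ring
  -- positivity
  have hvpos : 0 < v := hVarAstar
  have hwpos : 0 < w := by rw [varAval]; positivity
  have hupos : 0 < α₁ ^ 2 * w + σα2 := by positivity
  have hα₁2 : (0:ℝ) < α₁ ^ 2 := by positivity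
  -- plug in values
  rw [hρAA2, hρAM2, covAX, covAM, varMval]
  have e1 : (γ₁ * v) ^ 2 / (w * v) = γ₁ ^ 2 * v / w := by
    rw [mul_pow]
    field_simp
  have e2 : (α₁ * w) ^ 2 / (w * (α₁ ^ 2 * w + σα2)) = α₁ ^ 2 * w / (α₁ ^ 2 * w + σα2) := by
    rw [mul_pow]
    field_simp
  rw [e1, e2]
  have h1 : 1 - γ₁ ^ 2 * v / w = σγ2 / w := by
    rw [eq_div_iff hwpos.ne', sub_mul, div_mul_cancel₀ _ hwpos.ne', varAval]
    ring
  have h2 : 1 / (α₁ ^ 2 * w / (α₁ ^ 2 * w + σα2)) - γ₁ ^ 2 * v / w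
      = (σγ2 + σα2 / α₁ ^ 2) / w := by
    rw [one_div_div, eq_div_iff hwpos.ne', sub_mul, div_mul_cancel₀ _ hwpos.ne']
    field_simp
    rw [varAval]
    ring
  rw [h1, h2]
  have hD : (0:ℝ) < σγ2 + σα2 / α₁ ^ 2 := by positivity
  exact (div_div_div_cancel_right₀ hwpos.ne' _ _).symm
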